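/- Let ρ_AB be a separable bipartite state on ℂ^{d_A} ⊗ ℂ^{d_B}, let a ∈ ℝ^m and b ∈ ℝ^n be arbitrary vectors, let {P^{(b_A)}_{n_A}} be a complete set of MUMs on ℂ^{d_A} with efficiency parameter κ_A and {Q^{(b_B)}_{n_B}} a complete set of MUMs on ℂ^{d_B} with efficiency parameter κ_B. Then ‖Q_{a,b}(ρ_AB)‖_tr ≤ √((|a|² + 1 + κ_A)·(|b|² + 1 + κ_B)). -/

import Mathlib

open scoped BigOperators ComplexOrder
open Matrix

noncomputable def traceNorm {m n : Type*} [Fintype m] [Fintype n] [DecidableEq n]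
    (X : Matrix m n ℂ) : ℝ :=
  ((Matrix.posSemidef_conjTranspose_mul_self X).1.eigenvectorUnitary.1 *
    Matrix.diagonal (((↑) : ℝ → ℂ) ∘ (Real.sqrt ∘ (Matrix.posSemidef_conjTranspose_mul_self X).1.eigenvalues)) *
    (star (Matrix.posSemidef_conjTranspose_mul_self X).1.eigenvectorUnitary :
      Matrix n n ℂ)).trace.re

def IsDensityMatrix {ι : Type*} [Fintype ι] (ρ : Matrix ι ι ℂ) : Prop :=
  ρ.PosSemidef ∧ ρ.trace = 1

def IsNMPOVM (d N M : ℕ) (x : ℝ)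
    (E : Fin N → Fin M → Matrix (Fin d) (Fin d) ℂ) : Prop :=
  (∀ α k, (E α k).PosSemidef) ∧
  (∀ α, ∑ k, E α k = 1) ∧
  (∀ α k, (E α k).trace = (((d : ℝ) / M : ℝ) : ℂ)) ∧
  (∀ α k, (E α k * E α k).trace = (x : ℂ)) ∧
  (∀ α k l, k ≠ l → (E α k * E α l).trace =
      ((((d : ℝ) - M * x) / (M * ((M : ℝ) - 1)) : ℝ) : ℂ)) ∧
  (∀ α β k l, α ≠ β → (E α k * E β l).trace = (((d : ℝ) / M ^ 2 : ℝ) : ℂ)) ∧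
  ((d : ℝ) / M ^ 2 < x ∧ x ≤ min ((d : ℝ) ^ 2 / M ^ 2) ((d : ℝ) / M))

def IsInfoComplete (d N M : ℕ) : Prop := ((M : ℝ) - 1) * N = (d : ℝ) ^ 2 - 1
open Kronecker

/-- Partial trace over the second factor. -/
noncomputable def ptraceB {dA dB : ℕ} (ρ : Matrix (Fin dA × Fin dB) (Fin dA × Fin dB) ℂ) :
    Matrix (Fin dA) (Fin dA) ℂ :=
  Matrix.of fun i j => ∑ k, ρ (i, k) (j, k)

/-- Partial trace over the first factor. -/
noncomputable def ptraceA {dA dB : ℕ} (ρ : Matrix (Fin dA × Fin dB) (Fin dA × Fin dB) ℂ) :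
    Matrix (Fin dB) (Fin dB) ℂ :=
  Matrix.of fun i j => ∑ k, ρ (k, i) (k, j)

/-- A bipartite state is separable if it is a finite convex combination of
tensor products of local density matrices. -/
def SeparableState {dA dB : ℕ} (ρ : Matrix (Fin dA × Fin dB) (Fin dA × Fin dB) ℂ) : Prop :=
  ∃ (K : ℕ) (p : Fin K → ℝ) (ρA : Fin K → Matrix (Fin dA) (Fin dA) ℂ)
    (ρB : Fin K → Matrix (Fin dB) (Fin dB) ℂ),
    (∀ i, 0 ≤ p i) ∧ (∑ i, p i = 1) ∧
    (∀ i, IsDensityMatrix (ρA i)) ∧ (∀ i, IsDensityMatrix (ρB i)) ∧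
    ρ = ∑ i, (p i : ℂ) • (ρA i ⊗ₖ ρB i)
/-- A complete set of d+1 mutually unbiased measurements (MUMs) on ℂ^d with
efficiency parameter κ. -/
def IsMUMs (d : ℕ) (κ : ℝ) (P : Fin (d + 1) → Fin d → Matrix (Fin d) (Fin d) ℂ) : Prop :=
  (∀ b n, (P b n).PosSemidef) ∧ (∀ b, ∑ n, P b n = 1) ∧
  (∀ b n, (P b n).trace = 1) ∧
  (∀ b n, (P b n * P b n).trace = (κ : ℂ)) ∧
  (∀ b n n', n ≠ n' → (P b n * P b n').trace = (((1 - κ) / ((d : ℝ) - 1) : ℝ) : ℂ)) ∧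
  (∀ b b' n n', b ≠ b' → (P b n * P b' n').trace = ((1 / (d : ℝ) : ℝ) : ℂ)) ∧
  (1 / (d : ℝ) < κ ∧ κ ≤ 1)


section SepAux

variable {ι : Type*} [Fintype ι]

lemma trace_mul_herm_real {A B : Matrix ι ι ℂ} (hA : A.IsHermitian) (hB : B.IsHermitian) :
    (A * B).trace = (((A * B).trace.re : ℝ) : ℂ) := by
  have h : (starRingEnd ℂ) ((A * B).trace) = (A * B).trace := by
    calc (starRingEnd ℂ) ((A * B).trace) = ((A * B)ᴴ).trace := by
          rw [trace_conjTranspose]; rfl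
      _ = (B * A).trace := by rw [conjTranspose_mul, hA.eq, hB.eq]
      _ = (A * B).trace := trace_mul_comm B A
  exact (Complex.conj_eq_iff_re.mp h).symm

lemma trace_psd_nonneg' [DecidableEq ι] {A : Matrix ι ι ℂ} (hA : A.PosSemidef) : 0 ≤ A.trace := by
  exact hA.trace_nonneg

open scoped MatrixOrder in
lemma trace_mul_psd_nonneg {A B : Matrix ι ι ℂ} [DecidableEq ι]
    (hA : A.PosSemidef) (hB : B.PosSemidef) : 0 ≤ ((A * B).trace).re := by
  have h1 : A = CFC.sqrt A * CFC.sqrt A := (CFC.sqrt_mul_sqrt_self A hA.nonneg).symm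
  have h2 : (A * B).trace = (CFC.sqrt A * B * CFC.sqrt A).trace := by
    conv_lhs => rw [h1]
    rw [trace_mul_cycle (CFC.sqrt A) B (CFC.sqrt A)]
  have h3 : (CFC.sqrt A * B * CFC.sqrt A).PosSemidef := by
    have := hB.conjTranspose_mul_mul_same (CFC.sqrt A)
    rwa [(CFC.sqrt_nonneg A).posSemidef.1.eq] at this
  rw [h2]
  exact (RCLike.nonneg_iff.mp (trace_psd_nonneg' h3)).1

end SepAux

section SepCS

variable {μ ν : Type*} [Fintype μ] [Fintype ν]

lemma re_trace_conjTranspose_mul (X Y : Matrix μ ν ℂ) :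
    ((Xᴴ * Y).trace).re =
      ∑ q : μ × ν, ((X q.1 q.2).re * (Y q.1 q.2).re + (X q.1 q.2).im * (Y q.1 q.2).im) := by
  rw [Matrix.trace, Fintype.sum_prod_type]
  rw [Complex.re_sum]
  rw [Finset.sum_comm]
  congr 1
  ext j
  rw [Matrix.diag_apply, Matrix.mul_apply, Complex.re_sum]
  congr 1
  ext i
  simp [Matrix.conjTranspose_apply, Complex.mul_re]

lemma hs_cauchy_schwarz (X Y : Matrix μ ν ℂ) :
    ((Xᴴ * Y).trace).re ≤
      Real.sqrt ((Xᴴ * X).trace.re) * Real.sqrt ((Yᴴ * Y).trace.re) := by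
  have key := Real.sum_mul_le_sqrt_mul_sqrt (Finset.univ : Finset ((μ × ν) × Bool))
    (fun q => if q.2 then (X q.1.1 q.1.2).re else (X q.1.1 q.1.2).im)
    (fun q => if q.2 then (Y q.1.1 q.1.2).re else (Y q.1.1 q.1.2).im)
  have e1 : ∀ (Z W : Matrix μ ν ℂ),
      ∑ q : (μ × ν) × Bool, (if q.2 then (Z q.1.1 q.1.2).re else (Z q.1.1 q.1.2).im) *
        (if q.2 then (W q.1.1 q.1.2).re else (W q.1.1 q.1.2).im) = ((Zᴴ * W).trace).re := by
    intro Z W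
    rw [re_trace_conjTranspose_mul]
    rw [Fintype.sum_prod_type]
    congr 1
    ext q
    simp [Fintype.sum_bool, add_comm]
  have e2 : ∀ (Z : Matrix μ ν ℂ),
      ∑ q : (μ × ν) × Bool, (if q.2 then (Z q.1.1 q.1.2).re else (Z q.1.1 q.1.2).im) ^ 2 =
        ((Zᴴ * Z).trace).re := by
    intro Z
    rw [← e1 Z Z]
    congr 1
    ext q
    rcases q.2 <;> simp [pow_two]
  rw [← e1 X Y, ← e2 X, ← e2 Y]
  exact key

end SepCS

section SepTN

variable {μ ν κ' : Type*} [Fintype μ] [Fintype ν] [Fintype κ'] [DecidableEq ν] [DecidableEq μ]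

lemma traceNorm_factor_le (A : Matrix μ κ' ℂ) (B : Matrix ν κ' ℂ) :
    traceNorm (A * Bᴴ) ≤ Real.sqrt ((Aᴴ * A).trace.re) * Real.sqrt ((Bᴴ * B).trace.re) := by
  set M := A * Bᴴ with hM
  have hN : (Mᴴ * M).PosSemidef := Matrix.posSemidef_conjTranspose_mul_self M
  set ev : ν → ℝ := hN.1.eigenvalues with hev
  set V : Matrix ν ν ℂ := (hN.1.eigenvectorUnitary : Matrix ν ν ℂ) with hV
  have hVV : star V * V = 1 := Matrix.mem_unitaryGroup_iff'.mp hN.1.eigenvectorUnitary.2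
  have hVV' : V * star V = 1 := Matrix.mem_unitaryGroup_iff.mp hN.1.eigenvectorUnitary.2
  have hdiag : star V * (Mᴴ * M) * V = diagonal (fun j => ((ev j : ℝ) : ℂ)) :=
    by have := hN.1.conjStarAlgAut_star_eigenvectorUnitary; rw [Unitary.conjStarAlgAut_star_apply] at this; exact this
  have hevnn : ∀ j, 0 ≤ ev j := hN.eigenvalues_nonneg
  have hstep : traceNorm M = ∑ j, Real.sqrt (ev j) := by
    show ((V * diagonal (((↑) : ℝ → ℂ) ∘ (Real.sqrt ∘ ev)) * star V).trace).re = _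
    have : V * diagonal (((↑) : ℝ → ℂ) ∘ (Real.sqrt ∘ ev)) * star V
        = V * diagonal (RCLike.ofReal ∘ Real.sqrt ∘ ev) * star V := rfl
    rw [this, trace_mul_cycle, hVV, one_mul, trace_diagonal]
    rw [Complex.re_sum]
    simp [Function.comp]
  set g : ν → ℝ := fun j => if 0 < ev j then (Real.sqrt (ev j))⁻¹ else 0 with hg
  set W : Matrix μ ν ℂ := M * V * diagonal (fun j => (g j : ℂ)) with hW
  have hWH : Wᴴ = diagonal (fun j => (g j : ℂ)) * star V * Mᴴ := by
    rw [hW, conjTranspose_mul, conjTranspose_mul, diagonal_conjTranspose]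
    have : (star fun j => (g j : ℂ)) = fun j => (g j : ℂ) := by
      funext j; exact Complex.conj_ofReal _
    rw [this, star_eq_conjTranspose, ← Matrix.mul_assoc]
  have keyA : Wᴴ * (M * V) = diagonal (fun j => ((Real.sqrt (ev j) : ℝ) : ℂ)) := by
    rw [hWH]
    have e : diagonal (fun j => (g j : ℂ)) * star V * Mᴴ * (M * V)
        = diagonal (fun j => (g j : ℂ)) * (star V * (Mᴴ * M) * V) := by
      simp only [Matrix.mul_assoc]
    rw [e, hdiag, diagonal_mul_diagonal]
    refine congrArg diagonal (funext fun j => ?_)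
    by_cases h : 0 < ev j
    · simp only [hg, if_pos h]
      rw [← Complex.ofReal_mul]
      congr 1
      rw [inv_mul_eq_div, div_eq_iff (Real.sqrt_ne_zero'.mpr h)]
      exact (Real.mul_self_sqrt (hevnn j)).symm
    · have h0 : ev j = 0 := le_antisymm (not_lt.mp h) (hevnn j)
      simp [hg, if_neg h, h0]
  have keyB : Wᴴ * W = diagonal (fun j => (if 0 < ev j then (1 : ℂ) else 0)) := by
    rw [hW, ← Matrix.mul_assoc, keyA, diagonal_mul_diagonal]
    refine congrArg diagonal (funext fun j => ?_)
    by_cases h : 0 < ev j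
    · simp only [hg, if_pos h]
      rw [← Complex.ofReal_mul, mul_inv_cancel₀ (Real.sqrt_ne_zero'.mpr h), Complex.ofReal_one]
    · simp [hg, if_neg h]
  have keyC : W * diagonal (fun j => (if 0 < ev j then (1 : ℂ) else 0)) = W := by
    rw [hW, Matrix.mul_assoc (M * V), diagonal_mul_diagonal]
    congr 1
    refine congrArg diagonal (funext fun j => ?_)
    by_cases h : 0 < ev j
    · simp [hg, if_pos h]
    · simp [hg, if_neg h]
  have hWWH : (W * Wᴴ)ᴴ = W * Wᴴ := by
    rw [conjTranspose_mul, conjTranspose_conjTranspose]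
  have hidem : (W * Wᴴ) * (W * Wᴴ) = W * Wᴴ := by
    calc (W * Wᴴ) * (W * Wᴴ) = W * (Wᴴ * W) * Wᴴ := by simp only [Matrix.mul_assoc]
    _ = W * Wᴴ := by rw [keyB, keyC]
  have hPpsd : (1 - W * Wᴴ).PosSemidef := by
    have h1 : (1 - W * Wᴴ)ᴴ * (1 - W * Wᴴ) = 1 - W * Wᴴ := by
      rw [conjTranspose_sub, conjTranspose_one, hWWH, sub_mul, one_mul, mul_sub, mul_one, hidem]
      simp
    have := Matrix.posSemidef_conjTranspose_mul_self (1 - W * Wᴴ)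
    rwa [h1] at this
  have hVV2 : V * Vᴴ = 1 := by rwa [← Matrix.star_eq_conjTranspose]
  have hBtr : ((Bᴴ * V)ᴴ * (Bᴴ * V)).trace = (Bᴴ * B).trace := by
    rw [conjTranspose_mul, conjTranspose_conjTranspose]
    have e : Vᴴ * B * (Bᴴ * V) = Vᴴ * (B * Bᴴ) * V := by simp only [Matrix.mul_assoc]
    rw [e, trace_mul_cycle Vᴴ (B * Bᴴ) V, ← Matrix.mul_assoc, hVV2, Matrix.one_mul,
      trace_mul_comm]
  have hAtr : ((Aᴴ * W)ᴴ * (Aᴴ * W)).trace.re ≤ (Aᴴ * A).trace.re := by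
    have e : (Aᴴ * W)ᴴ * (Aᴴ * W) = Wᴴ * (A * Aᴴ) * W := by
      rw [conjTranspose_mul, conjTranspose_conjTranspose]
      simp only [Matrix.mul_assoc]
    have e2 : (Wᴴ * (A * Aᴴ) * W).trace = ((A * Aᴴ) * (W * Wᴴ)).trace := by
      rw [trace_mul_cycle Wᴴ (A * Aᴴ) W, trace_mul_comm (W * Wᴴ) (A * Aᴴ)]
    have hsplit : ((A * Aᴴ) * (W * Wᴴ)).trace.re ≤ ((A * Aᴴ)).trace.re := by
      have h3 : 0 ≤ (((A * Aᴴ) * (1 - W * Wᴴ)).trace).re :=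
        trace_mul_psd_nonneg (Matrix.posSemidef_self_mul_conjTranspose A) hPpsd
      have h4 : ((A * Aᴴ) * (1 - W * Wᴴ)).trace
          = (A * Aᴴ).trace - ((A * Aᴴ) * (W * Wᴴ)).trace := by
        rw [mul_sub, mul_one, trace_sub]
      rw [h4, Complex.sub_re] at h3
      linarith
    calc ((Aᴴ * W)ᴴ * (Aᴴ * W)).trace.re = ((A * Aᴴ) * (W * Wᴴ)).trace.re := by rw [e, e2]
    _ ≤ (A * Aᴴ).trace.re := hsplit
    _ = (Aᴴ * A).trace.re := by rw [trace_mul_comm]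
  have hmain : traceNorm M ≤ Real.sqrt (((Aᴴ * W)ᴴ * (Aᴴ * W)).trace.re)
      * Real.sqrt (((Bᴴ * V)ᴴ * (Bᴴ * V)).trace.re) := by
    have e3 : Wᴴ * (M * V) = (Aᴴ * W)ᴴ * (Bᴴ * V) := by
      rw [conjTranspose_mul Aᴴ W, conjTranspose_conjTranspose, hM]
      simp only [Matrix.mul_assoc]
    have e4 : traceNorm M = (((Aᴴ * W)ᴴ * (Bᴴ * V)).trace).re := by
      rw [hstep, ← e3, keyA, trace_diagonal, Complex.re_sum]
      simp
    rw [e4]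
    exact hs_cauchy_schwarz _ _
  calc traceNorm M ≤ _ := hmain
  _ ≤ Real.sqrt ((Aᴴ * A).trace.re) * Real.sqrt ((Bᴴ * B).trace.re) := by
      exact mul_le_mul (Real.sqrt_le_sqrt hAtr) (le_of_eq (by rw [hBtr]))
        (Real.sqrt_nonneg _) (Real.sqrt_nonneg _)

end SepTN

/-- purity bound: for a density matrix, tr σ² ≤ 1 -/
lemma trace_sq_le_one {d : ℕ} {σ : Matrix (Fin d) (Fin d) ℂ}
    (hσ : IsDensityMatrix σ) : ((σ * σ).trace).re ≤ 1 := by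
  have hH := hσ.1.1
  set ev : Fin d → ℝ := hH.eigenvalues with hev
  set V : Matrix (Fin d) (Fin d) ℂ := (hH.eigenvectorUnitary : Matrix (Fin d) (Fin d) ℂ) with hV
  have hVV : star V * V = 1 := Matrix.mem_unitaryGroup_iff'.mp hH.eigenvectorUnitary.2
  have hspec : σ = V * diagonal (fun j => ((ev j : ℝ) : ℂ)) * star V := hH.spectral_theorem
  have hcancel : ∀ (X : Matrix (Fin d) (Fin d) ℂ), star V * (V * X) = X := by
    intro X; rw [← Matrix.mul_assoc, hVV, Matrix.one_mul]
  have htr : σ.trace = ∑ j, ((ev j : ℝ) : ℂ) := by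
    rw [hspec, trace_mul_cycle V _ (star V), hVV, Matrix.one_mul, trace_diagonal]
  have hσ2 : (σ * σ).trace = ∑ j, ((ev j : ℝ) : ℂ) ^ 2 := by
    have e1 : σ * σ = V * (diagonal (fun j => ((ev j : ℝ) : ℂ))
        * diagonal (fun j => ((ev j : ℝ) : ℂ))) * star V := by
      conv_lhs => rw [hspec]
      simp only [Matrix.mul_assoc, hcancel]
    rw [e1, diagonal_mul_diagonal, trace_mul_cycle V _ (star V), hVV, Matrix.one_mul,
      trace_diagonal]
    exact Finset.sum_congr rfl fun j _ => (pow_two _).symm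
  have hevnn : ∀ j, 0 ≤ ev j := hσ.1.eigenvalues_nonneg
  have hsum1 : ∑ j, ev j = 1 := by
    have := hσ.2
    rw [htr] at this
    exact_mod_cast this
  have h2 : ((σ * σ).trace).re = ∑ j, ev j ^ 2 := by
    rw [hσ2]
    push_cast
    exact_mod_cast rfl
  rw [h2]
  calc ∑ j, ev j ^ 2 ≤ (∑ j, ev j) ^ 2 :=
        Finset.sum_sq_le_sq_sum_of_nonneg fun i _ => hevnn i
  _ = 1 := by rw [hsum1]; norm_num

set_option maxHeartbeats 2000000 in
lemma mum_sum_sq_le {d : ℕ} {κ : ℝ}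
    {P : Fin (d + 1) → Fin d → Matrix (Fin d) (Fin d) ℂ} (hP : IsMUMs d κ P)
    {σ : Matrix (Fin d) (Fin d) ℂ} (hσ : IsDensityMatrix σ) :
    ∑ p : Fin (d + 1) × Fin d, (((P p.1 p.2 * σ).trace).re) ^ 2 ≤ 1 + κ := by
  obtain ⟨hpsd, hsum, htr1, hκd, hoff, hcross, hκgt, hκle⟩ := hP
  -- dimension facts
  have hd0 : d ≠ 0 := by
    rintro rfl
    have := hσ.2
    simp [Matrix.trace] at this
  have hd1 : d ≠ 1 := by
    rintro rfl
    norm_num at hκgt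
    linarith
  have hd2 : (2 : ℝ) ≤ (d : ℝ) := by
    have : 2 ≤ d := by omega
    exact_mod_cast this
  have hdpos : (0 : ℝ) < d := by linarith
  have hdm1 : (0 : ℝ) < (d : ℝ) - 1 := by linarith
  set c : ℝ := (1 - κ) / ((d : ℝ) - 1) with hc
  set lam : ℝ := κ - c with hlam
  have hlamnn : 0 ≤ lam := by
    rw [hlam, hc]
    rw [sub_nonneg, div_le_iff₀ hdm1]
    have h1 : 1 / (d:ℝ) < κ := hκgt
    rw [div_lt_iff₀ hdpos] at h1
    nlinarith
  have hherm : ∀ p : Fin (d + 1) × Fin d, (P p.1 p.2).IsHermitian := fun p => (hpsd p.1 p.2).1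
  set t : Fin (d + 1) × Fin d → ℝ := fun p => ((P p.1 p.2 * σ).trace).re with ht
  have htreal : ∀ p, (P p.1 p.2 * σ).trace = ((t p : ℝ) : ℂ) := fun p =>
    trace_mul_herm_real (hherm p) hσ.1.1
  set s : Fin (d + 1) × Fin d → ℝ := fun p => t p - 1 / (d : ℝ) with hs
  set e0 : ℝ := 1 / (d : ℝ) with he0
  set σ0 : Matrix (Fin d) (Fin d) ℂ := σ - ((e0 : ℝ) : ℂ) • 1 with hσ0
  have hdneC : ((d : ℕ) : ℂ) ≠ 0 := Nat.cast_ne_zero.mpr hd0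
  have hσ0herm : σ0.IsHermitian := by
    show σ0ᴴ = σ0
    rw [hσ0, conjTranspose_sub, conjTranspose_smul, conjTranspose_one, hσ.1.1.eq]
    congr 1
    rw [Complex.star_def, Complex.conj_ofReal]
  have htrP0 : ∀ p, (P p.1 p.2 * σ0).trace = ((s p : ℝ) : ℂ) := by
    intro p
    rw [hσ0, Matrix.mul_sub, trace_sub, Matrix.mul_smul, trace_smul, Matrix.mul_one, htreal p,
      htr1]
    simp only [smul_eq_mul, mul_one]
    rw [hs]
    push_cast
    ring
  -- block sums vanish
  have hblock : ∀ b : Fin (d + 1), ∑ n, s (b, n) = 0 := by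
    intro b
    have h1 : ∑ n, (P b n * σ0).trace = σ0.trace := by
      rw [← trace_sum, ← Finset.sum_mul, hsum b, Matrix.one_mul]
    have h2 : σ0.trace = 0 := by
      rw [hσ0, trace_sub, trace_smul, Matrix.trace_one, hσ.2]
      simp only [smul_eq_mul, Fintype.card_fin]
      rw [he0]
      push_cast
      field_simp
      norm_num
    have h3 : ∑ n, ((s (b, n) : ℝ) : ℂ) = 0 := by
      rw [← h2, ← h1]
      exact Finset.sum_congr rfl fun n _ => (htrP0 (b, n)).symm
    have h4 : ((∑ n, s (b, n) : ℝ) : ℂ) = 0 := by push_cast; exact h3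
    exact_mod_cast h4
  have htot : ∑ p : Fin (d + 1) × Fin d, s p = 0 := by
    rw [Fintype.sum_prod_type]
    exact Finset.sum_eq_zero fun b _ => hblock b
  set S : ℝ := ∑ p : Fin (d + 1) × Fin d, s p ^ 2 with hS
  have hSnn : 0 ≤ S := Finset.sum_nonneg fun p _ => sq_nonneg _
  set R : Matrix (Fin d) (Fin d) ℂ :=
    ∑ p : Fin (d + 1) × Fin d, ((s p : ℝ) : ℂ) • P p.1 p.2 with hR
  have hRherm : Rᴴ = R := by
    rw [hR, conjTranspose_sum]
    refine Finset.sum_congr rfl fun p _ => ?_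
    rw [conjTranspose_smul, (hherm p).eq, Complex.star_def, Complex.conj_ofReal]
  have key1 : (σ0 * R).trace = ((S : ℝ) : ℂ) := by
    rw [hR, Finset.mul_sum, trace_sum]
    have e1 : ∀ p ∈ (Finset.univ : Finset (Fin (d+1) × Fin d)),
        (σ0 * (((s p : ℝ) : ℂ) • P p.1 p.2)).trace = ((s p ^ 2 : ℝ) : ℂ) := by
      intro p _
      rw [Matrix.mul_smul, trace_smul, trace_mul_comm, htrP0 p, smul_eq_mul]
      push_cast
      ring
    rw [Finset.sum_congr rfl e1, hS]
    push_cast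
    rfl
  -- Gram matrix structure
  have gram : ∀ p q : Fin (d + 1) × Fin d,
      (P p.1 p.2 * P q.1 q.2).trace =
        (((lam * (if p = q then 1 else 0) + (c - e0) * (if p.1 = q.1 then 1 else 0) + e0 : ℝ)) : ℂ) := by
    intro p q
    by_cases h1 : p = q
    · subst h1
      rw [hκd p.1 p.2, if_pos rfl, if_pos rfl]
      congr 1
      rw [hlam]
      ring
    · by_cases h2 : p.1 = q.1
      · have hne : p.2 ≠ q.2 := fun h => h1 (Prod.ext h2 h)
        rw [← h2, hoff p.1 p.2 q.2 hne, if_neg h1, if_pos rfl]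
        congr 1
        ring
      · rw [hcross p.1 q.1 p.2 q.2 h2, if_neg h1, if_neg h2]
        congr 1
        ring
  have key2 : (R * R).trace = ((lam * S : ℝ) : ℂ) := by
    have expand : R * R = ∑ p : Fin (d+1) × Fin d, ∑ q : Fin (d+1) × Fin d,
        (((s p * s q : ℝ) : ℂ)) • (P p.1 p.2 * P q.1 q.2) := by
      rw [hR, Finset.sum_mul_sum]
      refine Finset.sum_congr rfl fun p _ => Finset.sum_congr rfl fun q _ => ?_
      rw [Matrix.smul_mul, Matrix.mul_smul, smul_smul, Complex.ofReal_mul]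
    rw [expand]
    simp only [trace_sum, trace_smul, smul_eq_mul, gram]
    simp only [← Complex.ofReal_mul, ← Complex.ofReal_sum]
    congr 1
    -- now a purely real identity
    have hin : ∀ p : Fin (d+1) × Fin d,
        (∑ q : Fin (d+1) × Fin d, s q * (if p.1 = q.1 then (1:ℝ) else 0)) = 0 := by
      intro p
      rw [Fintype.sum_prod_type]
      have e2 : ∀ b' : Fin (d+1),
          ∑ n' : Fin d, s (b', n') * (if p.1 = b' then (1:ℝ) else 0) = 0 := by
        intro b'
        by_cases hb : p.1 = b'
        · simp only [if_pos hb, mul_one]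
          exact hblock b'
        · simp [if_neg hb]
      exact Finset.sum_eq_zero fun b' _ => e2 b'
    have hterm : ∀ p q : Fin (d+1) × Fin d,
        s p * s q * (lam * (if p = q then (1:ℝ) else 0) + (c - e0) * (if p.1 = q.1 then 1 else 0) + e0)
          = lam * (s p * (s q * (if p = q then 1 else 0)))
            + ((c - e0) * (s p * (s q * (if p.1 = q.1 then 1 else 0))) + e0 * (s p * s q)) := by
      intro p q
      ring
    calc ∑ p : Fin (d+1) × Fin d, ∑ q : Fin (d+1) × Fin d,
          s p * s q * (lam * (if p = q then (1:ℝ) else 0)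
            + (c - e0) * (if p.1 = q.1 then 1 else 0) + e0)
        = ∑ p : Fin (d+1) × Fin d, (lam * (s p * s p)
            + ((c - e0) * (s p * 0) + e0 * (s p * (∑ q : Fin (d+1) × Fin d, s q)))) := by
          refine Finset.sum_congr rfl fun p _ => ?_
          rw [Finset.sum_congr rfl fun q _ => hterm p q]
          rw [Finset.sum_add_distrib]
          congr 1
          · rw [← Finset.mul_sum]
            congr 1
            simp [mul_ite, Finset.sum_ite_eq]
          · rw [Finset.sum_add_distrib]
            congr 1
            · rw [← Finset.mul_sum]
              congr 1
              rw [← Finset.mul_sum]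
              congr 1
              exact hin p
            · rw [← Finset.mul_sum, ← Finset.mul_sum]
    _ = lam * S := by
          rw [htot]
          simp only [mul_zero, add_zero, zero_add]
          rw [hS, Finset.mul_sum]
          refine Finset.sum_congr rfl fun p _ => ?_
          ring
  -- the Hilbert-Schmidt norm of σ0
  set c0 : ℝ := ((σ0 * σ0).trace).re with hc0
  have hc0nn : 0 ≤ c0 := by
    have h := trace_psd_nonneg' (Matrix.posSemidef_conjTranspose_mul_self σ0)
    rw [hσ0herm.eq] at h
    exact (RCLike.nonneg_iff.mp h).1
  have he0d : e0 * (d : ℝ) = 1 := by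
    rw [he0]
    field_simp
  have he0nn : 0 ≤ e0 := by
    rw [he0]
    positivity
  have he0le1 : e0 ≤ 1 := by
    rw [he0, div_le_one hdpos]
    linarith
  have hc0le : c0 ≤ 1 - e0 := by
    have hexp : σ0 * σ0 = σ * σ - ((e0:ℝ):ℂ) • σ - ((e0:ℝ):ℂ) • σ
        + (((e0:ℝ):ℂ) * ((e0:ℝ):ℂ)) • (1 : Matrix (Fin d) (Fin d) ℂ) := by
      rw [hσ0]
      simp only [sub_mul, mul_sub, Matrix.smul_mul, Matrix.mul_smul, Matrix.mul_one,
        Matrix.one_mul, smul_smul]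
      abel
    have h1 : (σ0 * σ0).trace = (σ * σ).trace - ((2 * e0 - e0 * e0 * (d:ℝ) : ℝ) : ℂ) := by
      rw [hexp]
      simp only [trace_add, trace_sub, trace_smul, hσ.2, Matrix.trace_one, smul_eq_mul,
        mul_one, Fintype.card_fin]
      push_cast
      ring
    have h2 : c0 = ((σ * σ).trace).re - (2 * e0 - e0 * e0 * (d:ℝ)) := by
      rw [hc0, h1, Complex.sub_re, Complex.ofReal_re]
    have h3 : 2 * e0 - e0 * e0 * (d:ℝ) = e0 := by
      have h4 : e0 * e0 * (d:ℝ) = e0 * (e0 * (d:ℝ)) := by ring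
      rw [h4, he0d]
      ring
    rw [h2, h3]
    have := trace_sq_le_one hσ
    linarith
  -- Cauchy-Schwarz step
  have hCS : S ≤ Real.sqrt c0 * Real.sqrt (lam * S) := by
    have h := hs_cauchy_schwarz σ0 R
    rw [hσ0herm.eq, hRherm, key1, key2] at h
    rw [← hc0] at h
    simpa using h
  have hSle : S ≤ lam * (1 - e0) := by
    rcases eq_or_lt_of_le hSnn with h0 | h0
    · rw [← h0]
      exact mul_nonneg hlamnn (by linarith)
    · have h2 : S ^ 2 ≤ c0 * (lam * S) := by
        calc S ^ 2 ≤ (Real.sqrt c0 * Real.sqrt (lam * S)) ^ 2 := pow_le_pow_left₀ hSnn hCS 2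
        _ = c0 * (lam * S) := by
            rw [mul_pow, Real.sq_sqrt hc0nn, Real.sq_sqrt (mul_nonneg hlamnn hSnn)]
      have h3 : S ≤ c0 * lam := by nlinarith
      calc S ≤ c0 * lam := h3
      _ ≤ (1 - e0) * lam := mul_le_mul_of_nonneg_right hc0le hlamnn
      _ = lam * (1 - e0) := mul_comm _ _
  -- conclusion
  have hexp2 : ∀ p : Fin (d+1) × Fin d, t p ^ 2 = s p ^ 2 + 2 * e0 * s p + e0 ^ 2 := by
    intro p
    have h : s p = t p - e0 := rfl
    rw [show t p = s p + e0 by rw [h]; ring]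
    ring
  have hfin : ∑ p : Fin (d+1) × Fin d, t p ^ 2
      = S + 2 * e0 * (∑ p : Fin (d+1) × Fin d, s p) + (((d+1) * d : ℕ) : ℝ) * e0 ^ 2 := by
    simp only [hexp2]
    rw [Finset.sum_add_distrib, Finset.sum_add_distrib, ← Finset.mul_sum, Finset.sum_const]
    rw [hS]
    simp [Finset.card_univ, Fintype.card_prod, Fintype.card_fin, nsmul_eq_mul]
  have halg : lam * (1 - e0) + (((d+1) * d : ℕ) : ℝ) * e0 ^ 2 = 1 + κ := by
    rw [hlam, hc, he0]
    push_cast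
    field_simp
    ring
  rw [hfin, htot, mul_zero, add_zero]
  linarith

/-- Corollary 2 of the paper: for a separable bipartite state
ρ_AB, arbitrary real vectors a, b, and complete sets of MUMs with efficiency
parameters κ_A, κ_B on the two subsystems,
‖Q_{a,b}(ρ_AB)‖_tr ≤ √((|a|² + 1 + κ_A)·(|b|² + 1 + κ_B)). -/
theorem separability_criterion_MUM
    (dA dB m n : ℕ) (κA κB : ℝ)
    (P : Fin (dA + 1) → Fin dA → Matrix (Fin dA) (Fin dA) ℂ)
    (Q : Fin (dB + 1) → Fin dB → Matrix (Fin dB) (Fin dB) ℂ)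
    (hP : IsMUMs dA κA P) (hQ : IsMUMs dB κB Q)
    (a : Fin m → ℝ) (b : Fin n → ℝ)
    (ρ : Matrix (Fin dA × Fin dB) (Fin dA × Fin dB) ℂ)
    (hρ : IsDensityMatrix ρ) (hsep : SeparableState ρ) :
    traceNorm (Matrix.fromBlocks
      (Matrix.of fun (i : Fin m) (j : Fin n) => ((a i : ℂ) * (b j : ℂ)))
      (Matrix.of fun (i : Fin m) (q : Fin (dB + 1) × Fin dB) =>
        (a i : ℂ) * (Q q.1 q.2 * ptraceA ρ).trace)
      (Matrix.of fun (p : Fin (dA + 1) × Fin dA) (j : Fin n) =>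
        (P p.1 p.2 * ptraceB ρ).trace * (b j : ℂ))
      (Matrix.of fun (p : Fin (dA + 1) × Fin dA) (q : Fin (dB + 1) × Fin dB) =>
        ((P p.1 p.2 ⊗ₖ Q q.1 q.2) * ρ).trace)) ≤
    Real.sqrt ((∑ i, a i ^ 2 + 1 + κA) * (∑ j, b j ^ 2 + 1 + κB)) := by
  classical
  obtain ⟨K, w, ρA, ρB, hw0, hw1, hρA, hρB, hρeq⟩ := hsep
  have hermA : ∀ q : Fin (dA + 1) × Fin dA, (P q.1 q.2).IsHermitian := fun q => (hP.1 q.1 q.2).1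
  have hermB : ∀ q : Fin (dB + 1) × Fin dB, (Q q.1 q.2).IsHermitian := fun q => (hQ.1 q.1 q.2).1
  have htrA : ∀ i, ∑ k, ρA i k k = 1 := fun i => (hρA i).2
  have htrB : ∀ i, ∑ k, ρB i k k = 1 := fun i => (hρB i).2
  -- partial traces of the separable state
  have hptA : ptraceA ρ = ∑ i, (w i : ℂ) • ρB i := by
    ext x y
    show ∑ k, ρ (k, x) (k, y) = _
    rw [hρeq]
    simp only [Matrix.sum_apply, Matrix.smul_apply, Matrix.kroneckerMap_apply, smul_eq_mul]
    rw [Finset.sum_comm]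
    refine Finset.sum_congr rfl fun i _ => ?_
    rw [← Finset.mul_sum, ← Finset.sum_mul, htrA i, one_mul]
  have hptB : ptraceB ρ = ∑ i, (w i : ℂ) • ρA i := by
    ext x y
    show ∑ k, ρ (x, k) (y, k) = _
    rw [hρeq]
    simp only [Matrix.sum_apply, Matrix.smul_apply, Matrix.kroneckerMap_apply, smul_eq_mul]
    rw [Finset.sum_comm]
    refine Finset.sum_congr rfl fun i _ => ?_
    have e : ∀ k, w i * (ρA i x y * ρB i k k) = w i * ρA i x y * ρB i k k := fun k => by ring
    rw [Finset.sum_congr rfl fun k _ => e k, ← Finset.mul_sum, htrB i, mul_one]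
  have htrQA : ∀ qq : Fin (dB + 1) × Fin dB,
      (Q qq.1 qq.2 * ptraceA ρ).trace = ∑ i, (w i : ℂ) * (Q qq.1 qq.2 * ρB i).trace := by
    intro qq
    rw [hptA, Finset.mul_sum, trace_sum]
    exact Finset.sum_congr rfl fun i _ => by rw [Matrix.mul_smul, trace_smul, smul_eq_mul]
  have htrPB : ∀ pp : Fin (dA + 1) × Fin dA,
      (P pp.1 pp.2 * ptraceB ρ).trace = ∑ i, (w i : ℂ) * (P pp.1 pp.2 * ρA i).trace := by
    intro pp
    rw [hptB, Finset.mul_sum, trace_sum]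
    exact Finset.sum_congr rfl fun i _ => by rw [Matrix.mul_smul, trace_smul, smul_eq_mul]
  have htrPQ : ∀ (pp : Fin (dA + 1) × Fin dA) (qq : Fin (dB + 1) × Fin dB),
      ((P pp.1 pp.2 ⊗ₖ Q qq.1 qq.2) * ρ).trace
        = ∑ i, (w i : ℂ) * ((P pp.1 pp.2 * ρA i).trace * (Q qq.1 qq.2 * ρB i).trace) := by
    intro pp qq
    rw [hρeq, Finset.mul_sum, trace_sum]
    refine Finset.sum_congr rfl fun i _ => ?_
    rw [Matrix.mul_smul, trace_smul, smul_eq_mul, ← Matrix.mul_kronecker_mul,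
      Matrix.trace_kronecker]
  -- the rank-one factorisation
  set u : Fin K → (Fin m ⊕ (Fin (dA + 1) × Fin dA)) → ℂ := fun i =>
    Sum.elim (fun j => (a j : ℂ)) (fun q => (P q.1 q.2 * ρA i).trace) with hu
  set v : Fin K → (Fin n ⊕ (Fin (dB + 1) × Fin dB)) → ℂ := fun i =>
    Sum.elim (fun j => (b j : ℂ)) (fun q => (Q q.1 q.2 * ρB i).trace) with hv
  set Am : Matrix (Fin m ⊕ (Fin (dA + 1) × Fin dA)) (Fin K) ℂ :=
    Matrix.of (fun r i => ((Real.sqrt (w i) : ℝ) : ℂ) * u i r) with hAm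
  set Bm : Matrix (Fin n ⊕ (Fin (dB + 1) × Fin dB)) (Fin K) ℂ :=
    Matrix.of (fun r i => ((Real.sqrt (w i) : ℝ) : ℂ) * v i r) with hBm
  have hrealu : ∀ (i : Fin K) (q : Fin (dA + 1) × Fin dA), (P q.1 q.2 * ρA i).trace = (((P q.1 q.2 * ρA i).trace.re : ℝ) : ℂ) :=
    fun i q => trace_mul_herm_real (hermA q) (hρA i).1.1
  have hrealv : ∀ (i : Fin K) (q : Fin (dB + 1) × Fin dB), (Q q.1 q.2 * ρB i).trace = (((Q q.1 q.2 * ρB i).trace.re : ℝ) : ℂ) :=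
    fun i q => trace_mul_herm_real (hermB q) (hρB i).1.1
  have hentry : ∀ r s, (Am * Bmᴴ) r s = ∑ i, (w i : ℂ) * (u i r * v i s) := by
    intro r s
    rw [Matrix.mul_apply]
    refine Finset.sum_congr rfl fun i _ => ?_
    rw [Matrix.conjTranspose_apply, hAm, hBm]
    simp only [Matrix.of_apply]
    have hcv : star (v i s) = v i s := by
      rcases s with s | s
      · show (starRingEnd ℂ) _ = _
        simp only [hv, Sum.elim_inl]
        exact Complex.conj_ofReal _
      · show (starRingEnd ℂ) _ = _
        simp only [hv, Sum.elim_inr]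
        rw [hrealv i s]
        exact Complex.conj_ofReal _
    have hsw : star (((Real.sqrt (w i) : ℝ)) : ℂ) = (((Real.sqrt (w i) : ℝ)) : ℂ) :=
      Complex.conj_ofReal _
    rw [star_mul', hcv, hsw]
    have hws : (((Real.sqrt (w i) : ℝ)) : ℂ) * (((Real.sqrt (w i) : ℝ)) : ℂ) = ((w i : ℝ) : ℂ) := by
      rw [← Complex.ofReal_mul, Real.mul_self_sqrt (hw0 i)]
    calc ((Real.sqrt (w i) : ℝ) : ℂ) * u i r * ((((Real.sqrt (w i) : ℝ)) : ℂ) * v i s)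
        = (((Real.sqrt (w i) : ℝ) : ℂ) * (((Real.sqrt (w i) : ℝ)) : ℂ)) * (u i r * v i s) := by
          ring
    _ = (w i : ℂ) * (u i r * v i s) := by rw [hws]
  have hsumw : ∑ i, (w i : ℂ) = 1 := by
    norm_cast
  -- the block matrix equals Am * Bmᴴ
  have hM : (Matrix.fromBlocks
      (Matrix.of fun (i : Fin m) (j : Fin n) => ((a i : ℂ) * (b j : ℂ)))
      (Matrix.of fun (i : Fin m) (q : Fin (dB + 1) × Fin dB) =>
        (a i : ℂ) * (Q q.1 q.2 * ptraceA ρ).trace)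
      (Matrix.of fun (p : Fin (dA + 1) × Fin dA) (j : Fin n) =>
        (P p.1 p.2 * ptraceB ρ).trace * (b j : ℂ))
      (Matrix.of fun (p : Fin (dA + 1) × Fin dA) (q : Fin (dB + 1) × Fin dB) =>
        ((P p.1 p.2 ⊗ₖ Q q.1 q.2) * ρ).trace)) = Am * Bmᴴ := by
    ext r s
    rcases r with r | r <;> rcases s with s | s
    · rw [hentry]
      simp only [Matrix.fromBlocks_apply₁₁, Matrix.of_apply, hu, hv, Sum.elim_inl]
      rw [← Finset.sum_mul, hsumw, one_mul]
    · rw [hentry]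
      simp only [Matrix.fromBlocks_apply₁₂, Matrix.of_apply, hu, hv, Sum.elim_inl, Sum.elim_inr]
      rw [htrQA s, Finset.mul_sum]
      exact Finset.sum_congr rfl fun i _ => by ring
    · rw [hentry]
      simp only [Matrix.fromBlocks_apply₂₁, Matrix.of_apply, hu, hv, Sum.elim_inl, Sum.elim_inr]
      rw [htrPB r, Finset.sum_mul]
      exact Finset.sum_congr rfl fun i _ => by ring
    · rw [hentry]
      simp only [Matrix.fromBlocks_apply₂₂, Matrix.of_apply, hu, hv, Sum.elim_inr]
      rw [htrPQ r s]
  -- Frobenius norm bounds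
  have hbA : ((Amᴴ * Am).trace).re ≤ (∑ j, a j ^ 2) + 1 + κA := by
    rw [re_trace_conjTranspose_mul, Fintype.sum_prod_type, Finset.sum_comm]
    have hper : ∀ i : Fin K, (∑ r : Fin m ⊕ (Fin (dA + 1) × Fin dA),
        ((Am r i).re * (Am r i).re + (Am r i).im * (Am r i).im))
        ≤ w i * ((∑ j, a j ^ 2) + 1 + κA) := by
      intro i
      have e1 : ∀ r, (Am r i).re * (Am r i).re + (Am r i).im * (Am r i).im
          = w i * ((u i r).re ^ 2 + (u i r).im ^ 2) := by
        intro r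
        rw [hAm]
        simp only [Matrix.of_apply, Complex.mul_re, Complex.mul_im, Complex.ofReal_re,
          Complex.ofReal_im, zero_mul, mul_zero, sub_zero, add_zero, zero_add]
        have h := Real.mul_self_sqrt (hw0 i)
        nlinarith [h]
      rw [Finset.sum_congr rfl fun r _ => e1 r, ← Finset.mul_sum]
      apply mul_le_mul_of_nonneg_left ?_ (hw0 i)
      rw [Fintype.sum_sum_type]
      have eA : ∀ j : Fin m, ((u i (Sum.inl j)).re ^ 2 + (u i (Sum.inl j)).im ^ 2) = a j ^ 2 := by
        intro j
        simp [hu]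
      have eB : ∀ q : Fin (dA + 1) × Fin dA,
          ((u i (Sum.inr q)).re ^ 2 + (u i (Sum.inr q)).im ^ 2)
            = ((P q.1 q.2 * ρA i).trace.re) ^ 2 := by
        intro q
        simp only [hu, Sum.elim_inr]
        rw [hrealu i q]
        simp
      rw [Finset.sum_congr rfl fun j _ => eA j, Finset.sum_congr rfl fun q _ => eB q]
      have := mum_sum_sq_le hP (hρA i)
      linarith
    calc ∑ i : Fin K, ∑ r : Fin m ⊕ (Fin (dA + 1) × Fin dA),
          ((Am r i).re * (Am r i).re + (Am r i).im * (Am r i).im)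
        ≤ ∑ i : Fin K, w i * ((∑ j, a j ^ 2) + 1 + κA) := Finset.sum_le_sum fun i _ => hper i
    _ = (∑ i, w i) * ((∑ j, a j ^ 2) + 1 + κA) := by rw [← Finset.sum_mul]
    _ = (∑ j, a j ^ 2) + 1 + κA := by rw [hw1, one_mul]
  have hbB : ((Bmᴴ * Bm).trace).re ≤ (∑ j, b j ^ 2) + 1 + κB := by
    rw [re_trace_conjTranspose_mul, Fintype.sum_prod_type, Finset.sum_comm]
    have hper : ∀ i : Fin K, (∑ r : Fin n ⊕ (Fin (dB + 1) × Fin dB),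
        ((Bm r i).re * (Bm r i).re + (Bm r i).im * (Bm r i).im))
        ≤ w i * ((∑ j, b j ^ 2) + 1 + κB) := by
      intro i
      have e1 : ∀ r, (Bm r i).re * (Bm r i).re + (Bm r i).im * (Bm r i).im
          = w i * ((v i r).re ^ 2 + (v i r).im ^ 2) := by
        intro r
        rw [hBm]
        simp only [Matrix.of_apply, Complex.mul_re, Complex.mul_im, Complex.ofReal_re,
          Complex.ofReal_im, zero_mul, mul_zero, sub_zero, add_zero, zero_add]
        have h := Real.mul_self_sqrt (hw0 i)
        nlinarith [h]
      rw [Finset.sum_congr rfl fun r _ => e1 r, ← Finset.mul_sum]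
      apply mul_le_mul_of_nonneg_left ?_ (hw0 i)
      rw [Fintype.sum_sum_type]
      have eA : ∀ j : Fin n, ((v i (Sum.inl j)).re ^ 2 + (v i (Sum.inl j)).im ^ 2) = b j ^ 2 := by
        intro j
        simp [hv]
      have eB : ∀ q : Fin (dB + 1) × Fin dB,
          ((v i (Sum.inr q)).re ^ 2 + (v i (Sum.inr q)).im ^ 2)
            = ((Q q.1 q.2 * ρB i).trace.re) ^ 2 := by
        intro q
        simp only [hv, Sum.elim_inr]
        rw [hrealv i q]
        simp
      rw [Finset.sum_congr rfl fun j _ => eA j, Finset.sum_congr rfl fun q _ => eB q]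
      have := mum_sum_sq_le hQ (hρB i)
      linarith
    calc ∑ i : Fin K, ∑ r : Fin n ⊕ (Fin (dB + 1) × Fin dB),
          ((Bm r i).re * (Bm r i).re + (Bm r i).im * (Bm r i).im)
        ≤ ∑ i : Fin K, w i * ((∑ j, b j ^ 2) + 1 + κB) := Finset.sum_le_sum fun i _ => hper i
    _ = (∑ i, w i) * ((∑ j, b j ^ 2) + 1 + κB) := by rw [← Finset.sum_mul]
    _ = (∑ j, b j ^ 2) + 1 + κB := by rw [hw1, one_mul]
  have hCA : (0 : ℝ) ≤ (∑ j, a j ^ 2) + 1 + κA := by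
    have h1 : (0 : ℝ) ≤ ∑ j, a j ^ 2 := Finset.sum_nonneg fun _ _ => sq_nonneg _
    have h2 : (0 : ℝ) ≤ 1 / (dA : ℝ) := by positivity
    have h3 := hP.2.2.2.2.2.2.1
    linarith
  rw [hM]
  calc traceNorm (Am * Bmᴴ)
      ≤ Real.sqrt ((Amᴴ * Am).trace.re) * Real.sqrt ((Bmᴴ * Bm).trace.re) :=
        traceNorm_factor_le Am Bm
  _ ≤ Real.sqrt ((∑ j, a j ^ 2) + 1 + κA) * Real.sqrt ((∑ j, b j ^ 2) + 1 + κB) :=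
        mul_le_mul (Real.sqrt_le_sqrt hbA) (Real.sqrt_le_sqrt hbB)
          (Real.sqrt_nonneg _) (Real.sqrt_nonneg _)
  _ = Real.sqrt (((∑ j, a j ^ 2) + 1 + κA) * ((∑ j, b j ^ 2) + 1 + κB)) :=
        (Real.sqrt_mul hCA _).symm
  _ = Real.sqrt ((∑ i, a i ^ 2 + 1 + κA) * (∑ j, b j ^ 2 + 1 + κB)) := rfl
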